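/- Let G be a countable discrete group acting continuously on a compact metric space (X,d), let {F_n} be a sequence of finite subsets of G, and let K ⊆ X be a non-empty compact set. Let s ≥ 0, N ∈ ℕ and ε > 0, and suppose c := W(K,N,ε,s,{F_n}) > 0. Then there is a Borel probability measure μ on X with μ(K) = 1 such that μ(B_{F_n}(x,ε)) ≤ (1/c) exp(−s|F_n|) for every x ∈ X and every n ≥ N. -/

import Mathlib

open Filter Set MeasureTheory Topology ENNReal Pointwise

variable {G X : Type*}

section Defs

variable [Group G] [MetricSpace X] [MulAction G X]

/-- The Bowen ball `B_F(x,ε) = {y : d(gx,gy) < ε for all g ∈ F}`. -/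
def bowenBall (F : Finset G) (x : X) (ε : ℝ) : Set X :=
  {y : X | ∀ g ∈ F, dist (g • x) (g • y) < ε}

/-- A Følner sequence: `|F_n ∆ gF_n|/|F_n| → 0` for every `g ∈ G`. -/
def IsFolnerSeq (F : ℕ → Finset G) : Prop :=
  ∀ g : G, Tendsto
    (fun n => ((symmDiff (F n : Set G) ((g * ·) '' (F n : Set G))).ncard : ℝ) / (F n).card)
    atTop (𝓝 0)

/-- A tempered sequence: `|⋃_{k<n} F_k⁻¹ F_n| ≤ C |F_n|` for all `n`. -/
def IsTemperedSeq (F : ℕ → Finset G) : Prop :=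
  ∃ C : ℝ, 0 < C ∧ ∀ n : ℕ,
    ((⋃ k ∈ Finset.range n, ((F k : Set G)⁻¹ * (F n : Set G))).ncard : ℝ) ≤ C * (F n).card

/-- The growth condition `lim_n |F_n| / log n = ∞`. -/
def GrowthCond (F : ℕ → Finset G) : Prop :=
  Tendsto (fun n : ℕ => ((F n).card : ℝ) / Real.log n) atTop atTop

/-- `M(Z,N,ε,s,{F_n})`: infimum of `∑ exp(-s |F_{n_i}|)` over countable families of Bowen
balls `B_{F_{n_i}}(x_i,ε)`, `n_i ≥ N`, covering `Z`. -/
noncomputable def ballM (F : ℕ → Finset G) (Z : Set X) (N : ℕ) (ε s : ℝ) : ℝ≥0∞ :=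
  ⨅ (I : Set (X × ℕ)) (_ : I.Countable) (_ : ∀ p ∈ I, N ≤ p.2)
    (_ : Z ⊆ ⋃ p ∈ I, bowenBall (F p.2) p.1 ε),
    ∑' p : I, ENNReal.ofReal (Real.exp (-s * ((F (p : X × ℕ).2).card : ℝ)))

/-- `M(Z,ε,s,{F_n}) = lim_{N→∞} M(Z,N,ε,s,{F_n})` (the quantity is nondecreasing in `N`). -/
noncomputable def ballMN (F : ℕ → Finset G) (Z : Set X) (ε s : ℝ) : ℝ≥0∞ :=
  ⨆ N : ℕ, ballM F Z N ε s

/-- `M(Z,s,{F_n}) = lim_{ε→0} M(Z,ε,s,{F_n})` (the quantity is nondecreasing as `ε` decreases). -/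
noncomputable def ballMtot (F : ℕ → Finset G) (Z : Set X) (s : ℝ) : ℝ≥0∞ :=
  ⨆ (ε : ℝ) (_ : 0 < ε), ballMN F Z ε s

/-- The Bowen topological entropy of `Z` along `{F_n}`: the critical value of `s` at which
`M(Z,s,{F_n})` jumps from `+∞` to `0`, i.e. `inf {s : M(Z,s,{F_n}) = 0}`. -/
noncomputable def bowenEnt (F : ℕ → Finset G) (Z : Set X) : ℝ≥0∞ :=
  ⨅ (s : ℝ) (_ : ballMtot F Z s = 0), ENNReal.ofReal s

/-- The weighted quantity `W(f,N,ε,s,{F_n})`. -/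
noncomputable def wtW (F : ℕ → Finset G) (f : X → ℝ≥0∞) (N : ℕ) (ε s : ℝ) : ℝ≥0∞ :=
  ⨅ (I : Set (X × ℕ)) (c : X × ℕ → ℝ≥0∞) (_ : I.Countable)
    (_ : ∀ p ∈ I, N ≤ p.2 ∧ 0 < c p ∧ c p < ⊤)
    (_ : ∀ x : X, f x ≤ ∑' p : I, c (p : X × ℕ) *
        (bowenBall (F (p : X × ℕ).2) (p : X × ℕ).1 ε).indicator (fun _ => (1 : ℝ≥0∞)) x),
    ∑' p : I, c (p : X × ℕ) * ENNReal.ofReal (Real.exp (-s * ((F (p : X × ℕ).2).card : ℝ)))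

/-- `W(Z,N,ε,s,{F_n}) = W(χ_Z,N,ε,s,{F_n})`. -/
noncomputable def wtWset (F : ℕ → Finset G) (Z : Set X) (N : ℕ) (ε s : ℝ) : ℝ≥0∞ :=
  wtW F (Z.indicator fun _ => (1 : ℝ≥0∞)) N ε s

/-- `W(Z,ε,s,{F_n}) = lim_{N→∞} W(Z,N,ε,s,{F_n})`. -/
noncomputable def wtWN (F : ℕ → Finset G) (Z : Set X) (ε s : ℝ) : ℝ≥0∞ :=
  ⨆ N : ℕ, wtWset F Z N ε s

/-- `W(Z,s,{F_n}) = lim_{ε→0} W(Z,ε,s,{F_n})`. -/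
noncomputable def wtWtot (F : ℕ → Finset G) (Z : Set X) (s : ℝ) : ℝ≥0∞ :=
  ⨆ (ε : ℝ) (_ : 0 < ε), wtWN F Z ε s

/-- The weighted Bowen topological entropy of `Z` along `{F_n}`. -/
noncomputable def wtBowenEnt (F : ℕ → Finset G) (Z : Set X) : ℝ≥0∞ :=
  ⨅ (s : ℝ) (_ : wtWtot F Z s = 0), ENNReal.ofReal s

/-- A finite open cover of `X`. -/
def IsFinOpenCover (𝒰 : Finset (Set X)) : Prop :=
  (∀ U ∈ 𝒰, IsOpen U) ∧ ⋃₀ (𝒰 : Set (Set X)) = Set.univ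

/-- `N(⋁_{g∈F} g⁻¹𝒰)`: the minimal cardinality of a subcover of the refined cover, whose members
are the sets `X(𝐔) = ⋂_{g∈F} g⁻¹ U_g` with `U_g ∈ 𝒰`. -/
noncomputable def coverNum (𝒰 : Finset (Set X)) (F : Finset G) : ℕ :=
  sInf {k : ℕ | ∃ Λ : Finset (G → Set X), Λ.card = k ∧
    (∀ u ∈ Λ, ∀ g ∈ F, u g ∈ 𝒰) ∧
    (⋃ u ∈ Λ, ⋂ g ∈ F, (fun y => g • y) ⁻¹' u g) = Set.univ}

/-- `h_top(G,𝒰) = lim_n (1/|F_n|) log N(⋁_{g∈F_n} g⁻¹𝒰)` (the limit exists by Ornstein–Weiss,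
hence equals the `limsup`). -/
noncomputable def coverTopEnt (F : ℕ → Finset G) (𝒰 : Finset (Set X)) : ℝ :=
  limsup (fun n => Real.log (coverNum 𝒰 (F n)) / (F n).card) atTop

/-- The topological entropy `h_top(X,G)`, the supremum over finite open covers. -/
noncomputable def topEnt (X : Type*) [MetricSpace X] [MulAction G X] (F : ℕ → Finset G) : ℝ≥0∞ :=
  ⨆ (𝒰 : Finset (Set X)) (_ : IsFinOpenCover 𝒰), ENNReal.ofReal (coverTopEnt F 𝒰)

/-- `M(Z,𝒰,N,s,{F_n})`: infimum of `∑_{𝐔∈Λ} exp(-s m(𝐔))` over collections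
`Λ ⊆ ⋃_{j≥N} 𝒲_{F_j}(𝒰)` covering `Z`; an element `𝐔 ∈ 𝒲_{F_j}(𝒰)` is encoded as a pair
`(j, u)` with `u g ∈ 𝒰` for `g ∈ F_j` (and `u g = ∅` elsewhere), `X(𝐔) = ⋂_{g∈F_j} g⁻¹ (u g)`
and `m(𝐔) = |F_j|`. -/
noncomputable def covM (F : ℕ → Finset G) (𝒰 : Finset (Set X)) (Z : Set X) (N : ℕ) (s : ℝ) :
    ℝ≥0∞ :=
  ⨅ (Λ : Set (ℕ × (G → Set X)))
    (_ : ∀ p ∈ Λ, N ≤ p.1 ∧ (∀ g ∈ F p.1, p.2 g ∈ 𝒰) ∧ (∀ g ∉ F p.1, p.2 g = ∅))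
    (_ : Z ⊆ ⋃ p ∈ Λ, ⋂ g ∈ F p.1, (fun y => g • y) ⁻¹' p.2 g),
    ∑' p : Λ, ENNReal.ofReal (Real.exp (-s * ((F (p : ℕ × (G → Set X)).1).card : ℝ)))

/-- `M(Z,𝒰,s,{F_n}) = lim_{N→∞} M(Z,𝒰,N,s,{F_n})`. -/
noncomputable def covMtot (F : ℕ → Finset G) (𝒰 : Finset (Set X)) (Z : Set X) (s : ℝ) : ℝ≥0∞ :=
  ⨆ N : ℕ, covM F 𝒰 Z N s

/-- The cover-based Bowen topological entropy `h^B_top(𝒰,Z,{F_n}) = inf {s : M(Z,𝒰,s,{F_n}) = 0}`. -/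
noncomputable def covBowenEnt (F : ℕ → Finset G) (𝒰 : Finset (Set X)) (Z : Set X) : ℝ≥0∞ :=
  ⨅ (s : ℝ) (_ : covMtot F 𝒰 Z s = 0), ENNReal.ofReal s

/-- `diam(𝒰) = max {diam U : U ∈ 𝒰}`. -/
noncomputable def coverDiam (𝒰 : Finset (Set X)) : ℝ≥0∞ :=
  ⨆ U ∈ 𝒰, EMetric.diam U

end Defs

section MeasureDefs

variable [Group G] [MetricSpace X] [MulAction G X] [MeasurableSpace X]

/-- The quantity `-(1/m) log μ(B)`, with value `+∞` when `μ B = 0`. -/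
noncomputable def locTerm (μ : Measure X) (B : Set X) (m : ℕ) : ℝ≥0∞ :=
  if μ B = 0 then ⊤ else ENNReal.ofReal (-(Real.log ((μ B).toReal)) / (m : ℝ))

/-- The lower local entropy `h̲_μ^{loc}(x,ε,{F_n}) = liminf_n -(1/|F_n|) log μ(B_{F_n}(x,ε))`. -/
noncomputable def lowLoc (μ : Measure X) (F : ℕ → Finset G) (x : X) (ε : ℝ) : ℝ≥0∞ :=
  liminf (fun n => locTerm μ (bowenBall (F n) x ε) (F n).card) atTop

/-- The upper local entropy `limsup_n -(1/|F_n|) log μ(B_{F_n}(x,ε))`. -/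
noncomputable def upLoc (μ : Measure X) (F : ℕ → Finset G) (x : X) (ε : ℝ) : ℝ≥0∞ :=
  limsup (fun n => locTerm μ (bowenBall (F n) x ε) (F n).card) atTop

/-- `h̲_μ^{loc}(x,{F_n}) = lim_{ε→0} h̲_μ^{loc}(x,ε,{F_n})` (a monotone limit, i.e. the
supremum over `ε > 0`). -/
noncomputable def lowLocPt (μ : Measure X) (F : ℕ → Finset G) (x : X) : ℝ≥0∞ :=
  ⨆ (ε : ℝ) (_ : 0 < ε), lowLoc μ F x ε

/-- `h̲_μ^{loc}({F_n}) = ∫_X h̲_μ^{loc}(x,{F_n}) dμ(x)`. -/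
noncomputable def lowLocEnt (μ : Measure X) (F : ℕ → Finset G) : ℝ≥0∞ :=
  ∫⁻ x, lowLocPt μ F x ∂μ

/-- A finite measurable partition of `X`, presented as `P : Fin k → Set X`. -/
def IsMeasPartition {k : ℕ} (P : Fin k → Set X) : Prop :=
  (∀ i, MeasurableSet (P i)) ∧ Pairwise (Function.onFun Disjoint P) ∧ (⋃ i, P i) = Set.univ

/-- The static entropy `H_μ(𝒫_F)` of the join `𝒫_F = ⋁_{g∈F} g⁻¹𝒫`; its atoms are the
nonempty sets `⋂_{g∈F} g⁻¹ P(u g)` (distinct choices `u` yield disjoint atoms, and empty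
atoms contribute `0`). -/
noncomputable def partH (μ : Measure X) {k : ℕ} (P : Fin k → Set X) (F : Finset G) : ℝ :=
  letI := Classical.decEq G
  ∑ u : (↥F → Fin k),
    Real.negMulLog ((μ (⋂ g : ↥F, (fun y => (g : G) • y) ⁻¹' P (u g))).toReal)

/-- `h_μ(G,𝒫) = liminf_n (1/|F_n|) H_μ(𝒫_{F_n})`. -/
noncomputable def partEnt (μ : Measure X) (F : ℕ → Finset G) {k : ℕ} (P : Fin k → Set X) : ℝ :=
  liminf (fun n => partH μ P (F n) / (F n).card) atTop

/-- The measure-theoretic entropy `h_μ(X,G) = sup_𝒫 h_μ(G,𝒫)` (it is independent of the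
Følner sequence used to compute it). -/
noncomputable def measEnt (μ : Measure X) (F : ℕ → Finset G) : ℝ≥0∞ :=
  ⨆ (k : ℕ) (P : Fin k → Set X) (_ : IsMeasPartition P), ENNReal.ofReal (partEnt μ F P)

/-- Ergodicity of the `G`-action w.r.t. `μ`. -/
def IsErgodicGAction (G : Type*) [Group G] [MulAction G X] (μ : Measure X) : Prop :=
  ∀ A : Set X, MeasurableSet A → (∀ g : G, (g • ·) ⁻¹' A = A) → μ A = 0 ∨ μ A = 1

end MeasureDefs
section FrostmanAux

variable [Group G] [MetricSpace X] [MulAction G X]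

variable (F : ℕ → Finset G) (f g : X → ℝ≥0∞) (N : ℕ) (ε s : ℝ)

omit [Group G] [MulAction G X] in
lemma frostman_tsum_sep_mul (I : Set (X × ℕ)) (c k : X × ℕ → ℝ≥0∞) :
    ∑' p : ({p ∈ I | c p ≠ 0} : Set (X × ℕ)), c (p : X × ℕ) * k (p : X × ℕ)
      = ∑' p : I, c (p : X × ℕ) * k (p : X × ℕ) := by
  rw [tsum_subtype ({p ∈ I | c p ≠ 0} : Set (X × ℕ)) (fun p => c p * k p),
    tsum_subtype I (fun p => c p * k p)]
  congr 1
  funext p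
  by_cases hpI : p ∈ I
  · by_cases hc : c p = 0
    · simp [Set.indicator_apply, hpI, hc]
    · simp [Set.indicator_apply, hpI, hc]
  · simp [Set.indicator_apply, hpI]

lemma wtW_le_sum (I : Set (X × ℕ)) (c : X × ℕ → ℝ≥0∞) (hcnt : I.Countable)
    (hI : ∀ p ∈ I, N ≤ p.2 ∧ 0 < c p ∧ c p < ⊤)
    (hcov : ∀ x : X, f x ≤ ∑' p : I, c (p : X × ℕ) *
        (bowenBall (F (p : X × ℕ).2) (p : X × ℕ).1 ε).indicator (fun _ => (1 : ℝ≥0∞)) x) :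
    wtW F f N ε s ≤
      ∑' p : I, c (p : X × ℕ) * ENNReal.ofReal (Real.exp (-s * ((F (p : X × ℕ).2).card : ℝ))) :=
  iInf_le_of_le I <| iInf_le_of_le c <| iInf_le_of_le hcnt <| iInf_le_of_le hI <|
    iInf_le _ hcov

lemma wtW_le_sum' (I : Set (X × ℕ)) (c : X × ℕ → ℝ≥0∞) (hcnt : I.Countable)
    (hI : ∀ p ∈ I, N ≤ p.2 ∧ c p < ⊤)
    (hcov : ∀ x : X, f x ≤ ∑' p : I, c (p : X × ℕ) *
        (bowenBall (F (p : X × ℕ).2) (p : X × ℕ).1 ε).indicator (fun _ => (1 : ℝ≥0∞)) x) :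
    wtW F f N ε s ≤
      ∑' p : I, c (p : X × ℕ) * ENNReal.ofReal (Real.exp (-s * ((F (p : X × ℕ).2).card : ℝ))) := by
  rw [← frostman_tsum_sep_mul I c (fun p => ENNReal.ofReal (Real.exp (-s * ((F p.2).card : ℝ))))]
  refine wtW_le_sum F f N ε s _ c (hcnt.mono (sep_subset _ _)) ?_ ?_
  · rintro p ⟨hpI, hc⟩
    exact ⟨(hI p hpI).1, pos_iff_ne_zero.mpr hc, (hI p hpI).2⟩
  · intro x
    rw [frostman_tsum_sep_mul I c
      (fun p => (bowenBall (F p.2) p.1 ε).indicator (fun _ => (1:ℝ≥0∞)) x)]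
    exact hcov x

lemma wtW_mono (h : ∀ x, f x ≤ g x) : wtW F f N ε s ≤ wtW F g N ε s := by
  conv_rhs => unfold wtW
  simp only [le_iInf_iff]
  intro I c hcnt hI hcov
  exact wtW_le_sum F f N ε s I c hcnt hI fun x => (h x).trans (hcov x)

lemma wtW_zero : wtW F (fun _ : X => 0) N ε s = 0 := by
  refine le_antisymm ?_ zero_le
  have := wtW_le_sum F (fun _ : X => 0) N ε s ∅ (fun _ => 1) countable_empty
    (by simp) (fun x => by simp [tsum_empty])
  simpa [tsum_empty] using this

omit [Group G] [MulAction G X] in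
lemma frostman_tsum_union_split (I₁ I₂ : Set (X × ℕ)) (c₁ c₂ : X × ℕ → ℝ≥0∞)
    (k : X × ℕ → ℝ≥0∞) :
    ∑' p : (I₁ ∪ I₂ : Set (X × ℕ)),
        (I₁.indicator c₁ (p : X × ℕ) + I₂.indicator c₂ (p : X × ℕ)) * k (p : X × ℕ)
      = (∑' p : I₁, c₁ (p : X × ℕ) * k (p : X × ℕ))
        + ∑' p : I₂, c₂ (p : X × ℕ) * k (p : X × ℕ) := by
  rw [tsum_subtype (I₁ ∪ I₂) (fun p => (I₁.indicator c₁ p + I₂.indicator c₂ p) * k p),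
    tsum_subtype I₁ (fun p => c₁ p * k p), tsum_subtype I₂ (fun p => c₂ p * k p),
    ← ENNReal.tsum_add]
  congr 1
  funext p
  by_cases h1 : p ∈ I₁ <;> by_cases h2 : p ∈ I₂ <;>
    simp [Set.indicator_apply, h1, h2, add_mul]

lemma frostman_exists_family_of_lt {F : ℕ → Finset G} {f : X → ℝ≥0∞} {N : ℕ} {ε s : ℝ}
    {b : ℝ≥0∞} (h : wtW F f N ε s < b) :
    ∃ (I : Set (X × ℕ)) (c : X × ℕ → ℝ≥0∞), I.Countable ∧
      (∀ p ∈ I, N ≤ p.2 ∧ 0 < c p ∧ c p < ⊤) ∧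
      (∀ x : X, f x ≤ ∑' p : I, c (p : X × ℕ) *
        (bowenBall (F (p : X × ℕ).2) (p : X × ℕ).1 ε).indicator (fun _ => (1 : ℝ≥0∞)) x) ∧
      (∑' p : I, c (p : X × ℕ) *
        ENNReal.ofReal (Real.exp (-s * ((F (p : X × ℕ).2).card : ℝ)))) < b := by
  unfold wtW at h
  simp only [iInf_lt_iff] at h
  obtain ⟨I, c, hcnt, hI, hcov, hlt⟩ := h
  exact ⟨I, c, hcnt, hI, hcov, hlt⟩

lemma wtW_add : wtW F (fun x => f x + g x) N ε s ≤ wtW F f N ε s + wtW F g N ε s := by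
  by_cases h1 : wtW F f N ε s = ⊤
  · rw [h1]; simp
  by_cases h2 : wtW F g N ε s = ⊤
  · rw [h2]; simp
  refine ENNReal.le_of_forall_pos_le_add fun δ hδ _ => ?_
  have hδ2 : (0 : ℝ≥0∞) < δ / 2 := by
    simp [ENNReal.div_pos_iff, hδ.ne']
  obtain ⟨I₁, c₁, hcnt₁, hI₁, hcov₁, hlt₁⟩ :=
    frostman_exists_family_of_lt (F := F) (f := f) (N := N) (ε := ε) (s := s)
      (ENNReal.lt_add_right h1 hδ2.ne')
  obtain ⟨I₂, c₂, hcnt₂, hI₂, hcov₂, hlt₂⟩ :=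
    frostman_exists_family_of_lt (F := F) (f := g) (N := N) (ε := ε) (s := s)
      (ENNReal.lt_add_right h2 hδ2.ne')
  have key := wtW_le_sum' F (fun x => f x + g x) N ε s (I₁ ∪ I₂)
    (fun p => I₁.indicator c₁ p + I₂.indicator c₂ p) (hcnt₁.union hcnt₂)
    (by
      rintro p (hp | hp)
      · refine ⟨(hI₁ p hp).1, ?_⟩
        refine ENNReal.add_lt_top.mpr ⟨?_, ?_⟩
        · simpa [Set.indicator_apply, hp] using (hI₁ p hp).2.2
        · by_cases h2p : p ∈ I₂
          · simpa [Set.indicator_apply, h2p] using (hI₂ p h2p).2.2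
          · simp [Set.indicator_apply, h2p]
      · refine ⟨(hI₂ p hp).1, ?_⟩
        refine ENNReal.add_lt_top.mpr ⟨?_, ?_⟩
        · by_cases h1p : p ∈ I₁
          · simpa [Set.indicator_apply, h1p] using (hI₁ p h1p).2.2
          · simp [Set.indicator_apply, h1p]
        · simpa [Set.indicator_apply, hp] using (hI₂ p hp).2.2)
    (fun x => by
      rw [frostman_tsum_union_split I₁ I₂ c₁ c₂
        (fun p => (bowenBall (F p.2) p.1 ε).indicator (fun _ => (1:ℝ≥0∞)) x)]
      exact add_le_add (hcov₁ x) (hcov₂ x))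
  rw [frostman_tsum_union_split I₁ I₂ c₁ c₂
    (fun p => ENNReal.ofReal (Real.exp (-s * ((F p.2).card : ℝ))))] at key
  calc wtW F (fun x => f x + g x) N ε s ≤ _ := key
    _ ≤ (wtW F f N ε s + δ / 2) + (wtW F g N ε s + δ / 2) :=
        add_le_add hlt₁.le hlt₂.le
    _ = wtW F f N ε s + wtW F g N ε s + δ := by
        rw [add_add_add_comm, ENNReal.add_halves]

lemma wtW_smul_le (a : ℝ≥0∞) (ha : a ≠ 0) (ha' : a ≠ ⊤) :
    wtW F (fun x => a * f x) N ε s ≤ a * wtW F f N ε s := by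
  have key : a⁻¹ * wtW F (fun x => a * f x) N ε s ≤ wtW F f N ε s := by
    conv_rhs => unfold wtW
    simp only [le_iInf_iff]
    intro I c hcnt hI hcov
    have h1 : wtW F (fun x => a * f x) N ε s ≤
        a * ∑' p : I, c (p : X × ℕ) *
          ENNReal.ofReal (Real.exp (-s * ((F (p : X × ℕ).2).card : ℝ))) := by
      have harr : ∑' p : I, (fun p => a * c p) (p : X × ℕ) *
            ENNReal.ofReal (Real.exp (-s * ((F (p : X × ℕ).2).card : ℝ)))
          = a * ∑' p : I, c (p : X × ℕ) *
            ENNReal.ofReal (Real.exp (-s * ((F (p : X × ℕ).2).card : ℝ))) := by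
        rw [← ENNReal.tsum_mul_left]; congr 1; funext p; ring
      rw [← harr]
      refine wtW_le_sum F _ N ε s I (fun p => a * c p) hcnt ?_ ?_
      · intro p hp
        exact ⟨(hI p hp).1, ENNReal.mul_pos ha (hI p hp).2.1.ne',
          ENNReal.mul_lt_top ha'.lt_top (hI p hp).2.2⟩
      · intro x
        calc a * f x ≤ a * ∑' p : I, c (p : X × ℕ) *
              (bowenBall (F (p : X × ℕ).2) (p : X × ℕ).1 ε).indicator (fun _ => (1:ℝ≥0∞)) x :=
            mul_le_mul_right (hcov x) a
          _ = _ := by rw [← ENNReal.tsum_mul_left]; congr 1; funext p; ring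
    calc a⁻¹ * wtW F (fun x => a * f x) N ε s ≤ a⁻¹ * (a * _) := mul_le_mul_right h1 a⁻¹
      _ = _ := by rw [← mul_assoc, ENNReal.inv_mul_cancel ha ha', one_mul]
  calc wtW F (fun x => a * f x) N ε s
      = a * (a⁻¹ * wtW F (fun x => a * f x) N ε s) := by
        rw [← mul_assoc, ENNReal.mul_inv_cancel ha ha', one_mul]
    _ ≤ a * wtW F f N ε s := mul_le_mul_right key a

lemma wtW_smul_eq (a : ℝ≥0∞) (ha : a ≠ 0) (ha' : a ≠ ⊤) :
    wtW F (fun x => a * f x) N ε s = a * wtW F f N ε s := by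
  refine le_antisymm (wtW_smul_le F f N ε s a ha ha') ?_
  have := wtW_smul_le F (fun x => a * f x) N ε s a⁻¹ (ENNReal.inv_ne_zero.mpr ha')
    (ENNReal.inv_ne_top.mpr ha)
  have h2 : wtW F (fun x => a⁻¹ * (a * f x)) N ε s = wtW F f N ε s := by
    congr 1; funext x; rw [← mul_assoc, ENNReal.inv_mul_cancel ha ha', one_mul]
  rw [h2] at this
  calc a * wtW F f N ε s ≤ a * (a⁻¹ * wtW F (fun x => a * f x) N ε s) :=
      mul_le_mul_right this a
    _ = _ := by rw [← mul_assoc, ENNReal.mul_inv_cancel ha ha', one_mul]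

variable [ContinuousConstSMul G X]

lemma frostman_bowenBall_eq (Fi : Finset G) (x : X) (r : ℝ) :
    bowenBall Fi x r = ⋂ g ∈ Fi, (fun y => g • y) ⁻¹' Metric.ball (g • x) r := by
  ext y
  simp [bowenBall, Metric.mem_ball, dist_comm]

lemma frostman_isOpen_bowenBall (Fi : Finset G) (x : X) (r : ℝ) :
    IsOpen (bowenBall Fi x r) := by
  rw [frostman_bowenBall_eq]
  exact isOpen_biInter_finset fun g _ =>
    Metric.isOpen_ball.preimage (continuous_const_smul g)

lemma frostman_mem_bowenBall_self (Fi : Finset G) (x : X) {r : ℝ} (hr : 0 < r) :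
    x ∈ bowenBall Fi x r := by
  intro g _; simpa using hr

end FrostmanAux

/-- dynamical Frostman lemma. Let `K ⊆ X` be non-empty compact, `s ≥ 0`,
`N ∈ ℕ`, `ε > 0` and suppose `c := W(K,N,ε,s,{F_n}) > 0`. Then there is a Borel probability
measure `μ` on `X` with `μ(K) = 1` and
`μ(B_{F_n}(x,ε)) ≤ (1/c) exp(-s|F_n|)` for every `x ∈ X` and `n ≥ N`. -/
theorem frostman_lemma
    [Group G] [Countable G] [MetricSpace X] [CompactSpace X]
    [MulAction G X] [ContinuousConstSMul G X] [MeasurableSpace X] [BorelSpace X]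
    (F : ℕ → Finset G) (K : Set X) (hK : K.Nonempty) (hKc : IsCompact K)
    (s : ℝ) (hs : 0 ≤ s) (N : ℕ) (ε : ℝ) (hε : 0 < ε)
    (hc : 0 < wtWset F K N ε s) :
    ∃ μ : Measure X, IsProbabilityMeasure μ ∧ μ K = 1 ∧
      ∀ x : X, ∀ n : ℕ, N ≤ n →
        μ (bowenBall (F n) x ε) ≤
          (wtWset F K N ε s)⁻¹ * ENNReal.ofReal (Real.exp (-s * ((F n).card : ℝ))) := by
  classical
  have hXne : Nonempty X := ⟨hK.some⟩
  set c₀ := wtWset F K N ε s with hc₀def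
  -- `c₀` is finite, via a finite cover of `X` by Bowen balls.
  have hcT : c₀ ≠ ⊤ := by
    obtain ⟨t, ht⟩ := IsCompact.elim_finite_subcover (isCompact_univ (X := X))
      (fun x : X => bowenBall (F N) x ε) (fun x => frostman_isOpen_bowenBall _ _ _)
      (fun y _ => mem_iUnion.mpr ⟨y, frostman_mem_bowenBall_self _ _ hε⟩)
    set I : Set (X × ℕ) := (fun x => (x, N)) '' (t : Set X) with hIdef
    have hfin : I.Finite := t.finite_toSet.image _
    have hle := wtW_le_sum F (K.indicator fun _ => (1:ℝ≥0∞)) N ε s I (fun _ => 1)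
      hfin.countable
      (by rintro p ⟨x, hx, rfl⟩; exact ⟨le_rfl, zero_lt_one, ENNReal.one_lt_top⟩)
      (by
        intro y
        have hy := ht (mem_univ y)
        simp only [mem_iUnion, exists_prop] at hy
        obtain ⟨x₀, hx₀t, hyx₀⟩ := hy
        have hmem : ((x₀, N) : X × ℕ) ∈ I := ⟨x₀, hx₀t, rfl⟩
        have h1 : K.indicator (fun _ => (1:ℝ≥0∞)) y ≤
            (fun _ => (1:ℝ≥0∞)) ((x₀, N) : X × ℕ) *
              (bowenBall (F ((x₀, N) : X × ℕ).2) ((x₀, N) : X × ℕ).1 ε).indicator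
                (fun _ => (1 : ℝ≥0∞)) y := by
          simp only [one_mul, Set.indicator_of_mem hyx₀]
          by_cases hyK : y ∈ K
          · simp [Set.indicator_of_mem hyK]
          · simp [Set.indicator_of_notMem hyK]
        exact h1.trans (ENNReal.le_tsum (⟨(x₀, N), hmem⟩ : I)))
    haveI : Fintype I := hfin.fintype
    refine ne_top_of_le_ne_top ?_ hle
    rw [tsum_fintype]
    refine (ENNReal.sum_lt_top.mpr fun p _ => ?_).ne
    simpa using ENNReal.ofReal_lt_top
  have hc0 : c₀ ≠ 0 := hc.ne'
  have hcinvT : c₀⁻¹ ≠ ⊤ := ENNReal.inv_ne_top.mpr hc0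
  -- The sublinear functional `p`.
  set Φ : C(X, ℝ) → ℝ≥0∞ :=
    fun f => wtW F (K.indicator fun x => ENNReal.ofReal (f x)) N ε s with hΦdef
  set p : C(X, ℝ) → ℝ := fun f => (c₀⁻¹ * Φ f).toReal with hpdef
  have hΦfin : ∀ f : C(X, ℝ), Φ f ≠ ⊤ := by
    intro f
    set a := ENNReal.ofReal (‖f‖ + 1) with hadef
    have ha0 : a ≠ 0 := (ENNReal.ofReal_pos.mpr (by positivity)).ne'
    have h1 : ∀ x, K.indicator (fun x => ENNReal.ofReal (f x)) x ≤
        a * K.indicator (fun _ => (1:ℝ≥0∞)) x := by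
      intro x
      by_cases hx : x ∈ K
      · simp only [Set.indicator_of_mem hx, mul_one]
        refine ENNReal.ofReal_le_ofReal ?_
        have h2 := f.norm_coe_le_norm x
        rw [Real.norm_eq_abs] at h2
        linarith [le_abs_self (f x)]
      · simp [Set.indicator_of_notMem hx]
    refine ne_top_of_le_ne_top (b := a * c₀) ?_ ?_
    · exact ENNReal.mul_ne_top ENNReal.ofReal_ne_top hcT
    · calc Φ f ≤ wtW F (fun x => a * K.indicator (fun _ => (1:ℝ≥0∞)) x) N ε s :=
          wtW_mono F _ _ N ε s h1
        _ = a * c₀ := wtW_smul_eq F _ N ε s a ha0 ENNReal.ofReal_ne_top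
  have hΦ1 : Φ (1 : C(X, ℝ)) = c₀ := by
    have h1 : (K.indicator fun x => ENNReal.ofReal ((1 : C(X,ℝ)) x))
        = K.indicator fun _ => (1 : ℝ≥0∞) := by
      funext x; by_cases hx : x ∈ K <;>
        simp [Set.indicator_of_mem, Set.indicator_of_notMem, hx]
    rw [hΦdef]
    simp only [h1]
    rfl
  have hp_nonneg : ∀ f : C(X, ℝ), 0 ≤ p f := fun f => ENNReal.toReal_nonneg
  have hp_add : ∀ f g : C(X, ℝ), p (f + g) ≤ p f + p g := by
    intro f g
    have h1 : Φ (f + g) ≤ Φ f + Φ g := by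
      refine le_trans (wtW_mono F _
        (fun x => K.indicator (fun x => ENNReal.ofReal (f x)) x
          + K.indicator (fun x => ENNReal.ofReal (g x)) x) N ε s ?_)
        (wtW_add F _ _ N ε s)
      intro x
      by_cases hx : x ∈ K
      · simp only [Set.indicator_of_mem hx, ContinuousMap.add_apply]
        exact ENNReal.ofReal_add_le
      · simp [Set.indicator_of_notMem hx]
    have h2 : c₀⁻¹ * Φ (f + g) ≤ c₀⁻¹ * Φ f + c₀⁻¹ * Φ g := by
      rw [← mul_add]; exact mul_le_mul_right h1 _
    have hfin1 : c₀⁻¹ * Φ f ≠ ⊤ := ENNReal.mul_ne_top hcinvT (hΦfin f)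
    have hfin2 : c₀⁻¹ * Φ g ≠ ⊤ := ENNReal.mul_ne_top hcinvT (hΦfin g)
    calc p (f + g) = (c₀⁻¹ * Φ (f + g)).toReal := rfl
      _ ≤ ((c₀⁻¹ * Φ f) + (c₀⁻¹ * Φ g)).toReal :=
          ENNReal.toReal_mono (by simp [hfin1, hfin2, ENNReal.add_ne_top]) h2
      _ = p f + p g := ENNReal.toReal_add hfin1 hfin2
  have hp_smul : ∀ r : ℝ, 0 < r → ∀ f : C(X, ℝ), p (r • f) = r * p f := by
    intro r hr f
    have h1 : Φ (r • f) = ENNReal.ofReal r * Φ f := by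
      have heq : (K.indicator fun x => ENNReal.ofReal ((r • f) x))
          = fun x => ENNReal.ofReal r * K.indicator (fun x => ENNReal.ofReal (f x)) x := by
        funext x
        by_cases hx : x ∈ K
        · simp only [Set.indicator_of_mem hx, ContinuousMap.smul_apply, smul_eq_mul]
          exact ENNReal.ofReal_mul hr.le
        · simp [Set.indicator_of_notMem hx]
      rw [hΦdef]
      simp only [heq]
      exact wtW_smul_eq F _ N ε s _ (ENNReal.ofReal_pos.mpr hr).ne' ENNReal.ofReal_ne_top
    show (c₀⁻¹ * Φ (r • f)).toReal = r * (c₀⁻¹ * Φ f).toReal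
    rw [h1, mul_left_comm, ENNReal.toReal_mul, ENNReal.toReal_ofReal hr.le]
  -- Hahn–Banach extension from the span of the constant function `1`.
  have h1ne : (1 : C(X, ℝ)) ≠ 0 := by
    intro h
    have := congrFun (congrArg DFunLike.coe h) hK.some
    simpa using this
  set f₀ : C(X, ℝ) →ₗ.[ℝ] ℝ := LinearPMap.mkSpanSingleton (1 : C(X, ℝ)) (1 : ℝ) h1ne
    with hf₀def
  have hp1 : p (1 : C(X, ℝ)) = 1 := by
    show (c₀⁻¹ * Φ 1).toReal = 1
    rw [hΦ1, ENNReal.inv_mul_cancel hc0 hcT, ENNReal.toReal_one]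
  obtain ⟨L, hLeq, hLle⟩ := exists_extension_of_le_sublinear f₀ p
    (fun r hr f => hp_smul r hr f) (fun f g => hp_add f g)
    (by
      rintro ⟨z, hz⟩
      have hz' : z ∈ Submodule.span ℝ {(1 : C(X, ℝ))} := hz
      obtain ⟨r, rfl⟩ := Submodule.mem_span_singleton.mp hz'
      have happ : f₀ ⟨r • (1 : C(X, ℝ)), hz⟩ = r • (1 : ℝ) :=
        LinearPMap.mkSpanSingleton'_apply _ _ _ r _
      rw [happ]
      rcases le_or_gt r 0 with hr | hr
      · calc r • (1:ℝ) = r := by simp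
          _ ≤ 0 := hr
          _ ≤ p (r • (1 : C(X,ℝ))) := hp_nonneg _
      · rw [hp_smul r hr 1, hp1]
        simp)
  have hL1 : L (1 : C(X, ℝ)) = 1 := by
    have hmem : (1 : C(X, ℝ)) ∈ f₀.domain := Submodule.mem_span_singleton_self _
    have h := hLeq ⟨(1 : C(X, ℝ)), hmem⟩
    exact h.trans (LinearPMap.mkSpanSingleton_apply ℝ ℝ h1ne 1)
  have hLpos : ∀ f : C(X, ℝ), (∀ x, 0 ≤ f x) → 0 ≤ L f := by
    intro f hf
    have hΦ : Φ (-f) = 0 := by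
      have heq : (K.indicator fun x => ENNReal.ofReal ((-f) x)) = fun _ : X => 0 := by
        funext x
        by_cases hx : x ∈ K
        · simp only [Set.indicator_of_mem hx, ContinuousMap.neg_apply]
          exact ENNReal.ofReal_eq_zero.mpr (neg_nonpos.mpr (hf x))
        · simp [Set.indicator_of_notMem hx]
      rw [hΦdef]
      simp only [heq]
      exact wtW_zero F N ε s
    have hple : L (-f) ≤ 0 := by
      have h : L (-f) ≤ (c₀⁻¹ * Φ (-f)).toReal := hLle (-f)
      rwa [hΦ, mul_zero, ENNReal.toReal_zero] at h
    rw [map_neg] at hple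
    linarith
  have hLge1 : ∀ f : C(X, ℝ), (∀ x ∈ K, 1 ≤ f x) → 1 ≤ L f := by
    intro f hf
    have hΦ : Φ (1 - f) = 0 := by
      have heq : (K.indicator fun x => ENNReal.ofReal ((1 - f : C(X,ℝ)) x)) = fun _ : X => 0 := by
        funext x
        by_cases hx : x ∈ K
        · simp only [Set.indicator_of_mem hx, ContinuousMap.sub_apply,
            ContinuousMap.one_apply]
          exact ENNReal.ofReal_eq_zero.mpr (by linarith [hf x hx])
        · simp [Set.indicator_of_notMem hx]
      rw [hΦdef]
      simp only [heq]
      exact wtW_zero F N ε s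
    have hple : L (1 - f) ≤ 0 := by
      have h : L (1 - f) ≤ (c₀⁻¹ * Φ (1 - f)).toReal := hLle (1 - f)
      rwa [hΦ, mul_zero, ENNReal.toReal_zero] at h
    rw [map_sub, hL1] at hple
    linarith
  have hLball : ∀ (x : X) (n : ℕ), N ≤ n → ∀ f : C(X, ℝ), (∀ y, 0 ≤ f y) →
      (∀ y, f y ≤ 1) → (∀ y, y ∉ bowenBall (F n) x ε → f y = 0) →
      ENNReal.ofReal (L f) ≤ c₀⁻¹ * ENNReal.ofReal (Real.exp (-s * ((F n).card : ℝ))) := by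
    intro x n hn f hf0 hf1 hfz
    have hΦb : Φ f ≤ ENNReal.ofReal (Real.exp (-s * ((F n).card : ℝ))) := by
      have hle := wtW_le_sum F (K.indicator fun y => ENNReal.ofReal (f y)) N ε s
        {((x, n) : X × ℕ)} (fun _ => 1) (countable_singleton _)
        (by
          rintro q hq
          rw [mem_singleton_iff] at hq
          subst hq
          exact ⟨hn, zero_lt_one, ENNReal.one_lt_top⟩)
        (by
          intro y
          have hsing := tsum_singleton ((x, n) : X × ℕ)
            (fun q : X × ℕ => (1:ℝ≥0∞) * (bowenBall (F q.2) q.1 ε).indicator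
              (fun _ => (1:ℝ≥0∞)) y)
          rw [hsing, one_mul]
          by_cases hy : y ∈ bowenBall (F n) x ε
          · rw [Set.indicator_of_mem hy]
            by_cases hyK : y ∈ K
            · simp only [Set.indicator_of_mem hyK]
              exact (ENNReal.ofReal_le_ofReal (hf1 y)).trans (by simp)
            · simp [Set.indicator_of_notMem hyK]
          · rw [Set.indicator_of_notMem hy]
            by_cases hyK : y ∈ K
            · simp [Set.indicator_of_mem hyK, hfz y hy]
            · simp [Set.indicator_of_notMem hyK])
      have hsing2 := tsum_singleton ((x, n) : X × ℕ)
        (fun q : X × ℕ => (1:ℝ≥0∞) * ENNReal.ofReal (Real.exp (-s * ((F q.2).card : ℝ))))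
      rw [hsing2, one_mul] at hle
      exact hle
    have hne : c₀⁻¹ * ENNReal.ofReal (Real.exp (-s * ((F n).card : ℝ))) ≠ ⊤ :=
      ENNReal.mul_ne_top hcinvT ENNReal.ofReal_ne_top
    calc ENNReal.ofReal (L f) ≤ ENNReal.ofReal (p f) :=
        ENNReal.ofReal_le_ofReal (hLle f)
      _ ≤ ENNReal.ofReal ((c₀⁻¹ * ENNReal.ofReal
            (Real.exp (-s * ((F n).card : ℝ)))).toReal) :=
          ENNReal.ofReal_le_ofReal (ENNReal.toReal_mono hne (mul_le_mul_right hΦb _))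
      _ = _ := ENNReal.ofReal_toReal hne
  -- The Riesz-type content associated to `L`.
  set lamS : Set X → Set ℝ := fun A =>
    {r : ℝ | ∃ f : C(X, ℝ), (∀ y, 0 ≤ f y) ∧ (∀ y ∈ A, 1 ≤ f y) ∧ L f = r} with hlamSdef
  set lam : Set X → ℝ := fun A => sInf (lamS A) with hlamdef
  have hSne : ∀ A : Set X, (lamS A).Nonempty := by
    intro A
    exact ⟨L 1, 1, fun y => by simp, fun y _ => by simp, rfl⟩
  have hSbdd : ∀ A : Set X, BddBelow (lamS A) := by
    intro A
    refine ⟨0, ?_⟩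
    rintro r ⟨f, hf0, _, rfl⟩
    exact hLpos f hf0
  have hlam_le : ∀ (A : Set X) (f : C(X, ℝ)), (∀ y, 0 ≤ f y) → (∀ y ∈ A, 1 ≤ f y) →
      lam A ≤ L f := fun A f h0 h1 => csInf_le (hSbdd A) ⟨f, h0, h1, rfl⟩
  have hlam_nonneg : ∀ A : Set X, 0 ≤ lam A := by
    intro A
    refine le_csInf (hSne A) ?_
    rintro r ⟨f, h0, _, rfl⟩
    exact hLpos f h0
  have hlam_le_one : ∀ A : Set X, lam A ≤ 1 := by
    intro A
    have := hlam_le A 1 (fun y => by simp) (fun y _ => by simp)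
    rwa [hL1] at this
  have hlam_mono : ∀ A B : Set X, A ⊆ B → lam A ≤ lam B := by
    intro A B hAB
    refine csInf_le_csInf (hSbdd A) (hSne B) ?_
    rintro r ⟨f, h0, h1, rfl⟩
    exact ⟨f, h0, fun y hy => h1 y (hAB hy), rfl⟩
  have hlam_K : 1 ≤ lam K := by
    refine le_csInf (hSne K) ?_
    rintro r ⟨f, h0, h1, rfl⟩
    exact hLge1 f h1
  have hlam_subadd : ∀ A B : Set X, lam (A ∪ B) ≤ lam A + lam B := by
    intro A B
    refine _root_.le_of_forall_pos_le_add ?_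
    intro δ hδ
    obtain ⟨r1, hr1mem, hr1⟩ := Real.lt_sInf_add_pos (hSne A) (half_pos hδ)
    obtain ⟨r2, hr2mem, hr2⟩ := Real.lt_sInf_add_pos (hSne B) (half_pos hδ)
    obtain ⟨f1, hf10, hf11, rfl⟩ := hr1mem
    obtain ⟨f2, hf20, hf21, rfl⟩ := hr2mem
    have h1 : lam (A ∪ B) ≤ L (f1 + f2) := by
      refine hlam_le _ _ (fun y => add_nonneg (hf10 y) (hf20 y)) ?_
      rintro y (hy | hy)
      · simp only [ContinuousMap.add_apply]
        linarith [hf11 y hy, hf20 y]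
      · simp only [ContinuousMap.add_apply]
        linarith [hf21 y hy, hf10 y]
    rw [map_add] at h1
    calc lam (A ∪ B) ≤ L f1 + L f2 := h1
      _ ≤ (lam A + δ/2) + (lam B + δ/2) := add_le_add hr1.le hr2.le
      _ = lam A + lam B + δ := by ring
  have hlam_disj : ∀ K1 K2 : Set X, IsCompact K1 → IsCompact K2 → Disjoint K1 K2 →
      lam K1 + lam K2 ≤ lam (K1 ∪ K2) := by
    intro K1 K2 h1 h2 hd
    refine le_csInf (hSne _) ?_
    rintro r ⟨f, hf0, hf1, rfl⟩
    obtain ⟨g, hg0, hg1, hg01⟩ :=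
      exists_continuous_zero_one_of_isClosed h2.isClosed h1.isClosed hd.symm
    have hA : lam K1 ≤ L (f * g) := by
      refine hlam_le _ _ (fun y => mul_nonneg (hf0 y) (hg01 y).1) ?_
      intro y hy
      have hgy : g y = 1 := hg1 hy
      simp only [ContinuousMap.mul_apply, hgy, mul_one]
      exact hf1 y (Or.inl hy)
    have hB : lam K2 ≤ L (f - f * g) := by
      refine hlam_le _ _ ?_ ?_
      · intro y
        have h01 := hg01 y
        simp only [ContinuousMap.sub_apply, ContinuousMap.mul_apply]
        nlinarith [hf0 y, h01.1, h01.2]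
      · intro y hy
        have hgy : g y = 0 := hg0 hy
        simp only [ContinuousMap.sub_apply, ContinuousMap.mul_apply, hgy, mul_zero, sub_zero]
        exact hf1 y (Or.inr hy)
    have hsum : lam K1 + lam K2 ≤ L (f * g) + L (f - f * g) := add_le_add hA hB
    have hfg : f * g + (f - f * g) = f := by ring
    rwa [← map_add, hfg] at hsum
  set Λc : MeasureTheory.Content X :=
    { toFun := fun K' => Real.toNNReal (lam K')
      mono' := fun K1 K2 h => Real.toNNReal_le_toNNReal (hlam_mono _ _ h)
      sup_disjoint' := by
        intro K1 K2 hd _ _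
        have heq : lam (↑(K1 ⊔ K2)) = lam ↑K1 + lam ↑K2 := by
          refine le_antisymm ?_ (hlam_disj _ _ K1.2 K2.2 hd)
          exact hlam_subadd ↑K1 ↑K2
        show Real.toNNReal (lam ↑(K1 ⊔ K2)) = Real.toNNReal (lam ↑K1) + Real.toNNReal (lam ↑K2)
        rw [heq, Real.toNNReal_add (hlam_nonneg _) (hlam_nonneg _)]
      sup_le' := by
        intro K1 K2
        show Real.toNNReal (lam ↑(K1 ⊔ K2)) ≤ Real.toNNReal (lam ↑K1) + Real.toNNReal (lam ↑K2)
        refine le_trans (Real.toNNReal_le_toNNReal (hlam_subadd ↑K1 ↑K2)) ?_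
        exact Real.toNNReal_add_le } with hΛcdef
  have hΛapp : ∀ K' : TopologicalSpace.Compacts X,
      (Λc K' : ℝ≥0∞) = ENNReal.ofReal (lam ↑K') := fun K' => rfl
  set μ : Measure X := Λc.measure with hμdef
  have hμuniv_le : μ Set.univ ≤ 1 := by
    rw [hμdef, MeasureTheory.Content.measure_apply _ MeasurableSet.univ,
      Λc.outerMeasure_of_isOpen Set.univ isOpen_univ]
    refine iSup₂_le fun K' _ => ?_
    rw [hΛapp]
    exact ENNReal.ofReal_le_one.mpr (hlam_le_one _)
  have hμK_ge : 1 ≤ μ K := by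
    rw [hμdef, MeasureTheory.Content.measure_apply _ hKc.isClosed.measurableSet,
      Λc.outerMeasure_eq_iInf K]
    refine le_iInf fun U => le_iInf fun hU => le_iInf fun hKU => ?_
    refine le_trans ?_ (Λc.le_innerContent ⟨K, hKc⟩ ⟨U, hU⟩ hKU)
    rw [hΛapp]
    exact ENNReal.one_le_ofReal.mpr hlam_K
  have hμK : μ K = 1 :=
    le_antisymm ((measure_mono (subset_univ K)).trans hμuniv_le) hμK_ge
  have hprob : IsProbabilityMeasure μ :=
    ⟨le_antisymm hμuniv_le (hμK ▸ measure_mono (subset_univ K))⟩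
  refine ⟨μ, hprob, hμK, ?_⟩
  intro x n hn
  have hB : IsOpen (bowenBall (F n) x ε) := frostman_isOpen_bowenBall _ _ _
  rw [hμdef, MeasureTheory.Content.measure_apply _ hB.measurableSet,
    Λc.outerMeasure_of_isOpen _ hB]
  refine iSup₂_le fun K' hK' => ?_
  obtain ⟨g, hg0, hg1, hg01⟩ := exists_continuous_zero_one_of_isClosed
    hB.isClosed_compl K'.2.isClosed (disjoint_compl_left.mono_right hK')
  have h1 : lam ↑K' ≤ L g :=
    hlam_le _ _ (fun y => (hg01 y).1) (fun y hy => (hg1 hy).ge)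
  rw [hΛapp]
  calc ENNReal.ofReal (lam ↑K') ≤ ENNReal.ofReal (L g) := ENNReal.ofReal_le_ofReal h1
    _ ≤ c₀⁻¹ * ENNReal.ofReal (Real.exp (-s * ((F n).card : ℝ))) :=
        hLball x n hn g (fun y => (hg01 y).1) (fun y => (hg01 y).2)
          (fun y hy => hg0 hy)
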